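/- Let P be a commutative unital semigroup and Q = P × P the associated involution semigroup with (p,q)* = (q,p). Let T : P → B(H) be a unital contractive representation admitting a commuting family of normal contractive extensions {N(p)}_{p∈P} on K ⊇ H. Define T̃ : Q → B(H) by T̃(p,q) = T(p)* T(q). Then for any elements s₁,...,sₙ ∈ Q, the operator matrix [T̃(sᵢ* sⱼ)] is positive semidefinite. -/

import Mathlib

open scoped InnerProductSpace ComplexOrder

open NormedSpace in
lemma fuglede_clm {K : Type*} [NormedAddCommGroup K] [InnerProductSpace ℂ K] [CompleteSpace K]
    (a b : K →L[ℂ] K) (ha : star a * a = a * star a) (hab : a * b = b * a) :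
    star a * b = b * star a := by
  let +nondep : NormedAlgebra ℚ (K →L[ℂ] K) := .restrictScalars ℚ ℂ (K →L[ℂ] K)
  have hcomm : ∀ z : ℂ, exp (z • star a) * b = b * exp (z • star a) := by
    set f : ℂ → (K →L[ℂ] K) := fun z => exp (z • star a) * b * exp (z • (-star a)) with hfdef
    have hdiff : Differentiable ℂ f := fun z =>
      ((hasDerivAt_exp_smul_const (𝕂 := ℂ) (star a) z).differentiableAt.mul_const b).mul
        (hasDerivAt_exp_smul_const (𝕂 := ℂ) (-star a) z).differentiableAt
    have hbound : ∀ z : ℂ, ‖f z‖ ≤ ‖b‖ := by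
      intro z
      set w : ℂ := starRingEnd ℂ z with hw
      set c : K →L[ℂ] K := z • star a - w • a with hc
      have hstarc : star c = -c := by
        simp [hc, hw, star_sub, star_smul, Complex.conj_conj, neg_sub]
      have hcab : Commute (star a) a := ha
      have hba : Commute b (w • a) := Commute.smul_right hab.symm w
      -- middle identity
      have hmid : exp (-(w • a)) * b * exp (w • a) = b := by
        have h4 := ((hba.neg_right).exp_right).eq
        rw [← h4, mul_assoc, ← exp_add_of_commute ((Commute.refl (w • a)).neg_left)]
        simp
      have h1 : exp c = exp (z • star a) * exp (-(w • a)) := by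
        rw [hc, sub_eq_add_neg, exp_add_of_commute (((hcab.smul_left z).smul_right w).neg_right)]
      have h2 : exp (-c) = exp (w • a) * exp (z • (-star a)) := by
        rw [hc, neg_sub, sub_eq_add_neg, ← smul_neg,
          exp_add_of_commute (((hcab.symm.neg_right.smul_left w).smul_right z))]
      have key : f z = exp c * b * exp (-c) := by
        rw [h1, h2, hfdef]
        simp only []
        conv_lhs => rw [← hmid]
        simp only [mul_assoc]
      have hu1 : star (exp c) * exp c = 1 := by
        rw [star_exp, hstarc, ← exp_add_of_commute ((Commute.refl c).neg_left)]
        simp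
      have hnc : ‖exp c‖ ≤ 1 := by
        have h5 : ‖star (exp c) * exp c‖ = ‖exp c‖ * ‖exp c‖ :=
          CStarRing.norm_star_mul_self
        rw [hu1] at h5
        have h6 : ‖(1 : K →L[ℂ] K)‖ ≤ 1 := by
          rw [ContinuousLinearMap.one_def]; exact ContinuousLinearMap.norm_id_le
        nlinarith [norm_nonneg (exp c)]
      have hnc' : ‖exp (-c)‖ ≤ 1 := by
        rw [← hstarc, ← star_exp, norm_star] at *
        exact hnc
      calc ‖f z‖ = ‖exp c * b * exp (-c)‖ := by rw [key]
        _ ≤ ‖exp c * b‖ * ‖exp (-c)‖ := norm_mul_le _ _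
        _ ≤ ‖exp c‖ * ‖b‖ * ‖exp (-c)‖ := by
            have := norm_mul_le (exp c) b
            nlinarith [norm_nonneg (exp (-c)), norm_nonneg (exp c), norm_nonneg b]
        _ ≤ 1 * ‖b‖ * 1 := by gcongr
        _ = ‖b‖ := by ring
    have hb : Bornology.IsBounded (Set.range f) := by
      refine (Metric.isBounded_closedBall (x := (0 : K →L[ℂ] K)) (r := ‖b‖)).subset ?_
      rintro - ⟨z, rfl⟩
      simpa [Metric.mem_closedBall] using hbound z
    have hconst : ∀ z : ℂ, f z = f 0 := fun z => hdiff.apply_eq_apply_of_bounded hb z 0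
    intro z
    have h0 : f 0 = b := by simp [hfdef, exp_zero]
    have hz := (hconst z).trans h0
    have hinv : exp (z • (-star a)) * exp (z • star a) = 1 := by
      rw [← exp_add_of_commute (((Commute.refl (star a)).neg_left.smul_left z).smul_right z)]
      simp [smul_neg]
    calc exp (z • star a) * b = exp (z • star a) * b * 1 := by rw [mul_one]
      _ = f z * exp (z • star a) := by rw [hfdef]; simp only [mul_assoc, hinv]
      _ = b * exp (z • star a) := by rw [hz]
  have h1 : HasDerivAt (fun z : ℂ => exp (z • star a) * b)
      (star a * exp ((0:ℂ) • star a) * b) 0 :=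
    (hasDerivAt_exp_smul_const' (𝕂 := ℂ) (star a) 0).mul_const b
  have h2 : HasDerivAt (fun z : ℂ => b * exp (z • star a))
      (b * (star a * exp ((0:ℂ) • star a))) 0 :=
    (hasDerivAt_exp_smul_const' (𝕂 := ℂ) (star a) 0).const_mul b
  have heq : (fun z : ℂ => exp (z • star a) * b) = fun z : ℂ => b * exp (z • star a) :=
    funext hcomm
  rw [heq] at h1
  have := h1.unique h2
  simpa [exp_zero] using this

/-- For `T̃(p,q) = T(p)* T(q)` on the involution semigroup `Q = P × P` with
`(p,q)* = (q,p)`, the operator matrix `[T̃(sᵢ* sⱼ)]` is positive semidefinite whenever `T`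
admits a commuting family of normal contractive extensions. Writing `sᵢ = (pᵢ, qᵢ)`, one has
`sᵢ* sⱼ = (qᵢ pⱼ, pᵢ qⱼ)` so that `T̃(sᵢ* sⱼ) = T(qᵢ pⱼ)* T(pᵢ qⱼ)`. -/
theorem tilde_opMatrix_posSemidef
    {K : Type*} [NormedAddCommGroup K] [InnerProductSpace ℂ K] [CompleteSpace K]
    {P : Type*} [CommMonoid P]
    (H : Submodule ℂ K) [CompleteSpace H]
    (T : P → H →L[ℂ] H)
    (hT1 : T 1 = 1) (hTm : ∀ p q, T (p * q) = T p * T q) (hTc : ∀ p, ‖T p‖ ≤ 1)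
    (N : P → K →L[ℂ] K)
    (hNnormal : ∀ p, star (N p) * N p = N p * star (N p))
    (hNc : ∀ p, ‖N p‖ ≤ 1)
    (hNext : ∀ p (h : H), N p h = (T p h : K))
    (hNcomm : ∀ p q, N p * N q = N q * N p) :
    ∀ (n : ℕ) (s : Fin n → P × P) (h : Fin n → H),
      0 ≤ ∑ i, ∑ j,
        ⟪h i, (star (T ((s i).2 * (s j).1)) * T ((s i).1 * (s j).2)) (h j)⟫_ℂ := by
  intro n s h
  have hstarcomm : ∀ p q, star (N p) * N q = N q * star (N p) := fun p q =>
    fuglede_clm (N p) (N q) (hNnormal p) (hNcomm p q)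
  set v : Fin n → K := fun i => (star (N (s i).1) * N (s i).2) ((h i : K)) with hv
  have coeT : ∀ p q (x : H), ((T (p * q) x : H) : K) = N p (N q (x : K)) := by
    intro p q x
    rw [hTm, ContinuousLinearMap.mul_apply, ← hNext, ← hNext]
  have key : ∀ i j,
      ⟪h i, (star (T ((s i).2 * (s j).1)) * T ((s i).1 * (s j).2)) (h j)⟫_ℂ
        = ⟪v i, v j⟫_ℂ := by
    intro i j
    set pi := (s i).1; set qi := (s i).2; set pj := (s j).1; set qj := (s j).2
    calc ⟪h i, (star (T (qi * pj)) * T (pi * qj)) (h j)⟫_ℂ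
        = ⟪T (qi * pj) (h i), T (pi * qj) (h j)⟫_ℂ := by
          rw [ContinuousLinearMap.mul_apply, ContinuousLinearMap.star_eq_adjoint,
            ContinuousLinearMap.adjoint_inner_right]
      _ = ⟪((T (qi * pj) (h i) : H) : K), ((T (pi * qj) (h j) : H) : K)⟫_ℂ := rfl
      _ = ⟪N qi (N pj (h i : K)), N pi (N qj (h j : K))⟫_ℂ := by rw [coeT, coeT]
      _ = ⟪star (N pi) (N qi (N pj (h i : K))), N qj (h j : K)⟫_ℂ := by
          rw [ContinuousLinearMap.star_eq_adjoint]
          exact (ContinuousLinearMap.adjoint_inner_left _ _ _).symm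
      _ = ⟪N pj ((star (N pi) * N qi) (h i : K)), N qj (h j : K)⟫_ℂ := by
          have hop : star (N pi) * (N qi * N pj) = N pj * (star (N pi) * N qi) := by
            rw [hNcomm qi pj, ← mul_assoc, hstarcomm pi pj, mul_assoc]
          have := congrArg (fun (A : K →L[ℂ] K) => A (h i : K)) hop
          simp only [ContinuousLinearMap.mul_apply] at this
          rw [this]
          rfl
      _ = ⟪(star (N pi) * N qi) (h i : K), star (N pj) (N qj (h j : K))⟫_ℂ := by
          simp only [ContinuousLinearMap.star_eq_adjoint]
          exact (ContinuousLinearMap.adjoint_inner_right _ _ _).symm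
      _ = ⟪v i, v j⟫_ℂ := rfl
  simp_rw [key]
  have : ∑ i, ∑ j, ⟪v i, v j⟫_ℂ = ⟪∑ i, v i, ∑ j, v j⟫_ℂ := by
    simp_rw [inner_sum, sum_inner]
    exact Finset.sum_comm
  rw [this]
  rw [Complex.le_def]
  constructor
  · simpa using inner_self_nonneg (𝕜 := ℂ) (x := ∑ i, v i)
  · have h9 := inner_self_im (𝕜 := ℂ) (∑ i, v i)
    simp only [RCLike.im_to_complex] at h9
    exact h9.symm
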